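/- Let π = a + b·i ∈ ℤ[i] with 0 < a < b, gcd(a,b) = 1, and p = a² + b² a prime with p ≡ 1 (mod 4), and let 𝔽 = ℤ[i]/(π). Then: (i) for every v ∈ 𝔽^n, Σ_{λ∈𝔽∖{0}} wt_π(λ·v) = ( Σ_{x∈𝔽∖{0}} wt_π(x) ) · wt_H(v), where wt_H(v) is the number of nonzero coordinates of v; and (ii) for every linear code C ⊆ 𝔽^n containing a nonzero codeword, (p − 1)·d_π(C) ≤ ( Σ_{x∈𝔽∖{0}} wt_π(x) ) · d_H(C). -/

import Mathlib

open scoped Classical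

noncomputable section

/-- The quotient ring `ℤ[i]/(π)`. -/
abbrev GQuot (pi : GaussianInt) : Type := GaussianInt ⧸ Ideal.span {pi}

/-- The quotient map `ℤ[i] → ℤ[i]/(π)`. -/
def gmk (pi : GaussianInt) : GaussianInt →+* GQuot pi := Ideal.Quotient.mk (Ideal.span {pi})

/-- Mannheim weight of an element of `ℤ[i]/(π)`:
the minimum of `|x| + |y|` over representatives `x + y·i`. -/
def mWt (pi : GaussianInt) (α : GQuot pi) : ℕ :=
  sInf { w : ℕ | ∃ z : GaussianInt, gmk pi z = α ∧ z.re.natAbs + z.im.natAbs = w }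

/-- Mannheim weight of a vector: the sum of the Mannheim weights of its coordinates. -/
def mWtVec (pi : GaussianInt) {n : ℕ} (v : Fin n → GQuot pi) : ℕ := ∑ i, mWt pi (v i)

/-- Hamming weight of a vector: the number of nonzero coordinates. -/
def hWtVec {n : ℕ} {F : Type*} [Zero F] (v : Fin n → F) : ℕ :=
  Set.ncard { i : Fin n | v i ≠ 0 }

/-- Minimum Mannheim distance of a linear code (minimum Mannheim weight of a
nonzero codeword). -/
def dPiCode (pi : GaussianInt) {n : ℕ} (C : Submodule (GQuot pi) (Fin n → GQuot pi)) : ℕ :=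
  sInf { w : ℕ | ∃ c ∈ C, c ≠ 0 ∧ mWtVec pi c = w }

/-- Minimum Hamming distance of a linear code. -/
def dHCode (pi : GaussianInt) {n : ℕ} (C : Submodule (GQuot pi) (Fin n → GQuot pi)) : ℕ :=
  sInf { w : ℕ | ∃ c ∈ C, c ≠ 0 ∧ hWtVec c = w }

/-- `dPiMax pi n k`: the maximum minimum Mannheim distance over all `[n,k]` codes. -/
def dPiMax (pi : GaussianInt) (n k : ℕ) : ℕ :=
  sSup { d : ℕ | ∃ C : Submodule (GQuot pi) (Fin n → GQuot pi),
    Module.finrank (GQuot pi) C = k ∧ dPiCode pi C = d }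

/-- `dHMax pi n k`: the maximum minimum Hamming distance over all `[n,k]` codes. -/
def dHMax (pi : GaussianInt) (n k : ℕ) : ℕ :=
  sSup { d : ℕ | ∃ C : Submodule (GQuot pi) (Fin n → GQuot pi),
    Module.finrank (GQuot pi) C = k ∧ dHCode pi C = d }

/-- A `ℤ`-basis of the Gaussian integers. -/
def gaussBasis : Module.Basis (Fin 2) ℤ GaussianInt :=
  Module.Basis.ofEquivFun
  { toFun := fun z => ![z.re, z.im]
    invFun := fun f => ⟨f 0, f 1⟩
    left_inv := fun z => by ext <;> simp
    right_inv := fun f => by funext i; fin_cases i <;> simp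
    map_add' := fun x y => by funext i; fin_cases i <;> simp
    map_smul' := fun c x => by
      funext i
      fin_cases i <;> simp [zsmul_eq_mul, Zsqrtd.re_smul, Zsqrtd.im_smul] }

instance : Module.Free ℤ GaussianInt := Module.Free.of_basis gaussBasis
instance : Module.Finite ℤ GaussianInt := Module.Finite.of_basis gaussBasis

lemma mWt_zero (pi : GaussianInt) : mWt pi 0 = 0 := by
  refine Nat.sInf_eq_zero.mpr (Or.inl ?_)
  exact ⟨0, by simp [map_zero], by simp⟩

lemma stmt7_part1 (pi : GaussianInt) [Fintype (GQuot pi)] [IsDomain (GQuot pi)] {n : ℕ}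
    (v : Fin n → GQuot pi) :
    (∑ᶠ l ∈ {l : GQuot pi | l ≠ 0}, mWtVec pi (l • v))
        = (∑ᶠ x ∈ {x : GQuot pi | x ≠ 0}, mWt pi x) * hWtVec v := by
  have hS : ({l : GQuot pi | l ≠ 0}).Finite := Set.toFinite _
  set T := hS.toFinset with hT
  have hmemT : ∀ l : GQuot pi, l ∈ T ↔ l ≠ 0 := by
    intro l; rw [hT, Set.Finite.mem_toFinset]; rfl
  rw [finsum_mem_eq_finite_toFinset_sum _ hS, finsum_mem_eq_finite_toFinset_sum _ hS]
  have hbij : ∀ x : GQuot pi, x ≠ 0 →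
      ∑ l ∈ T, mWt pi (l * x) = ∑ y ∈ T, mWt pi y := by
    intro x hx
    refine Finset.sum_bij (fun l _ => l * x) ?_ ?_ ?_ ?_
    · intro l hl
      rw [hmemT] at *
      exact mul_ne_zero hl hx
    · intro l1 h1 l2 h2 hee
      exact mul_left_injective₀ hx hee
    · intro y hy
      have hmaps : ∀ l ∈ T, l * x ∈ T := by
        intro l hl
        rw [hmemT] at *
        exact mul_ne_zero hl hx
      have hsurj := Finset.surj_on_of_inj_on_of_card_le (fun l _ => l * x) hmaps
        (fun l1 l2 h1 h2 hee => mul_left_injective₀ hx hee) le_rfl y hy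
      obtain ⟨l, hl, hle⟩ := hsurj
      exact ⟨l, hl, hle.symm⟩
    · intro l hl
      rfl
  calc ∑ l ∈ T, mWtVec pi (l • v)
      = ∑ l ∈ T, ∑ i, mWt pi (l * v i) := by
        refine Finset.sum_congr rfl fun l _ => ?_
        simp [mWtVec]
    _ = ∑ i, ∑ l ∈ T, mWt pi (l * v i) := Finset.sum_comm
    _ = ∑ i, if v i ≠ 0 then (∑ y ∈ T, mWt pi y) else 0 := by
        refine Finset.sum_congr rfl fun i _ => ?_
        by_cases hvi : v i = 0
        · simp [hvi, mWt_zero]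
        · simp [hvi, hbij _ hvi]
    _ = (∑ y ∈ T, mWt pi y) * hWtVec v := by
        rw [Finset.sum_ite, Finset.sum_const, Finset.sum_const_zero, add_zero]
        rw [hWtVec, Set.ncard_eq_toFinset_card', Set.toFinset_setOf]
        rw [smul_eq_mul, mul_comm]

/-- (i) `Σ_{λ≠0} wt_π(λ·v) = (Σ_{x≠0} wt_π(x)) · wt_H(v)` for every vector `v`,
and (ii) `(p-1)·d_π(C) ≤ (Σ_{x≠0} wt_π(x)) · d_H(C)` for every linear code `C` with a nonzero
codeword. -/
theorem stmt7 (a b : ℕ) (ha : 0 < a) (hab : a < b) (hgcd : Nat.gcd a b = 1)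
    (hp : Nat.Prime (a ^ 2 + b ^ 2)) (hmod : (a ^ 2 + b ^ 2) % 4 = 1)
    (pi : GaussianInt) (hpi : pi = (⟨(a : ℤ), (b : ℤ)⟩ : GaussianInt)) (n : ℕ) :
    (∀ v : Fin n → GQuot pi,
      (∑ᶠ l ∈ {l : GQuot pi | l ≠ 0}, mWtVec pi (l • v))
        = (∑ᶠ x ∈ {x : GQuot pi | x ≠ 0}, mWt pi x) * hWtVec v) ∧
    (∀ C : Submodule (GQuot pi) (Fin n → GQuot pi), (∃ c ∈ C, c ≠ 0) →
      (a ^ 2 + b ^ 2 - 1) * dPiCode pi C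
        ≤ (∑ᶠ x ∈ {x : GQuot pi | x ≠ 0}, mWt pi x) * dHCode pi C) := by
  have hnorm : pi.norm = ((a ^ 2 + b ^ 2 : ℕ) : ℤ) := by
    subst hpi; simp only [Zsqrtd.norm]; push_cast; ring
  have hpine : pi ≠ 0 := by
    subst hpi
    intro h
    have := congrArg Zsqrtd.re h
    simp at this
    omega
  have hbot : Ideal.span {pi} ≠ ⊥ := by
    simpa [Ideal.span_singleton_eq_bot] using hpine
  haveI : Fintype (GQuot pi) := @Fintype.ofFinite _ (Ideal.finiteQuotientOfFreeOfNeBot _ hbot)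
  have hirr : Irreducible pi := by
    constructor
    · rw [← Zsqrtd.norm_eq_one_iff, hnorm, Int.natAbs_natCast]
      exact hp.ne_one
    · intro x y hxy
      have hn : (a ^ 2 + b ^ 2 : ℕ) = x.norm.natAbs * y.norm.natAbs := by
        have := congrArg (fun z => (Zsqrtd.norm z).natAbs) hxy
        simpa only [hnorm, Zsqrtd.norm_mul, Int.natAbs_mul, Int.natAbs_natCast] using this
      rcases hp.eq_one_or_self_of_dvd x.norm.natAbs ⟨_, hn⟩ with h1 | h1
      · exact Or.inl (Zsqrtd.norm_eq_one_iff.mp h1)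
      · refine Or.inr (Zsqrtd.norm_eq_one_iff.mp ?_)
        have hpos : 0 < a ^ 2 + b ^ 2 := hp.pos
        rw [h1] at hn
        nlinarith [hn]
  have hmax : (Ideal.span {pi}).IsMaximal :=
    PrincipalIdealRing.isMaximal_of_irreducible hirr
  haveI := hmax
  haveI : IsDomain (GQuot pi) := Ideal.Quotient.isDomain _
  -- injectivity of `Fin p → GQuot pi`
  have hinj : Function.Injective
      (fun k : Fin (a ^ 2 + b ^ 2) => gmk pi ((k : ℕ) : GaussianInt)) := by
    intro j k h
    have hmem : ((j : ℕ) : GaussianInt) - ((k : ℕ) : GaussianInt) ∈ Ideal.span {pi} :=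
      Ideal.Quotient.eq.mp h
    rw [Ideal.mem_span_singleton] at hmem
    have hdvd : pi ∣ ((((j : ℕ) : ℤ) - ((k : ℕ) : ℤ) : ℤ) : GaussianInt) := by
      have h2 : ((((j : ℕ) : ℤ) - ((k : ℕ) : ℤ) : ℤ) : GaussianInt)
          = ((j : ℕ) : GaussianInt) - ((k : ℕ) : GaussianInt) := by push_cast; ring
      rw [h2]; exact hmem
    have hnd : ((a ^ 2 + b ^ 2 : ℕ) : ℤ) ∣
        (((j : ℕ) : ℤ) - ((k : ℕ) : ℤ)) * (((j : ℕ) : ℤ) - ((k : ℕ) : ℤ)) := by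
      obtain ⟨w, hw⟩ := hdvd
      refine ⟨w.norm, ?_⟩
      have h3 := congrArg Zsqrtd.norm hw
      rwa [Zsqrtd.norm_intCast, Zsqrtd.norm_mul, hnorm] at h3
    have hpz : Prime ((a ^ 2 + b ^ 2 : ℕ) : ℤ) := Nat.prime_iff_prime_int.mp hp
    have hdm : ((a ^ 2 + b ^ 2 : ℕ) : ℤ) ∣ ((j : ℕ) : ℤ) - ((k : ℕ) : ℤ) := by
      rcases hpz.2.2 _ _ hnd with h' | h' <;> exact h'
    have hj := j.isLt
    have hk := k.isLt
    have hz : ((j : ℕ) : ℤ) - ((k : ℕ) : ℤ) = 0 := by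
      refine Int.eq_zero_of_dvd_of_natAbs_lt_natAbs hdm ?_
      rw [Int.natAbs_natCast]
      omega
    exact Fin.ext (by omega)
  have hcard : a ^ 2 + b ^ 2 ≤ Fintype.card (GQuot pi) := by
    simpa using Fintype.card_le_of_injective _ hinj
  refine ⟨fun v => stmt7_part1 pi v, ?_⟩
  -- part (ii)
  intro C hC
  obtain ⟨c, hcC, hcne⟩ := hC
  have hHne : { w : ℕ | ∃ c ∈ C, c ≠ 0 ∧ hWtVec c = w }.Nonempty := ⟨_, c, hcC, hcne, rfl⟩
  obtain ⟨c0, hc0C, hc0ne, hc0w⟩ := Nat.sInf_mem hHne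
  have hS : ({l : GQuot pi | l ≠ 0}).Finite := Set.toFinite _
  set T := hS.toFinset with hT
  have hmemT : ∀ l : GQuot pi, l ∈ T ↔ l ≠ 0 := by
    intro l; rw [hT, Set.Finite.mem_toFinset]; rfl
  -- each nonzero multiple of c0 is a nonzero codeword
  have hlow : ∀ l ∈ T, dPiCode pi C ≤ mWtVec pi (l • c0) := by
    intro l hl
    rw [hmemT] at hl
    have hsm : l • c0 ∈ C := C.smul_mem l hc0C
    have hne : l • c0 ≠ 0 := by
      intro h0
      obtain ⟨i, hi⟩ := Function.ne_iff.mp hc0ne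
      have : l * c0 i = 0 := by
        have := congrFun h0 i
        simpa using this
      exact (mul_ne_zero hl hi) this
    exact Nat.sInf_le ⟨l • c0, hsm, hne, rfl⟩
  have hsum : T.card * dPiCode pi C ≤ ∑ l ∈ T, mWtVec pi (l • c0) := by
    simpa using Finset.card_nsmul_le_sum T _ _ hlow
  have hTcard : a ^ 2 + b ^ 2 - 1 ≤ T.card := by
    have hTeq : T = Finset.univ.erase 0 := by
      ext x
      simp [hmemT]
    have : T.card = Fintype.card (GQuot pi) - 1 := by
      rw [hTeq, Finset.card_erase_of_mem (Finset.mem_univ 0), Finset.card_univ]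
    omega
  have heq : ∑ l ∈ T, mWtVec pi (l • c0)
      = (∑ᶠ x ∈ {x : GQuot pi | x ≠ 0}, mWt pi x) * hWtVec c0 := by
    rw [← stmt7_part1 pi c0, finsum_mem_eq_finite_toFinset_sum _ hS]
  have hdH : hWtVec c0 = dHCode pi C := hc0w
  calc (a ^ 2 + b ^ 2 - 1) * dPiCode pi C
      ≤ T.card * dPiCode pi C := Nat.mul_le_mul_right _ hTcard
    _ ≤ ∑ l ∈ T, mWtVec pi (l • c0) := hsum
    _ = (∑ᶠ x ∈ {x : GQuot pi | x ≠ 0}, mWt pi x) * hWtVec c0 := heq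
    _ = _ := by rw [hdH, dHCode]
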